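/- Let X be a nonnegative random variable with cumulative distribution function F and finite mean E[X] = ∫₀^∞ (1 − F(x)) dx. Then the cumulative residual entropy of X satisfies 𝓔(X) + E[X] = Σ_{n=1}^∞ μ_{n+1:n+1} / (n(n+1)), where both sides are equal as values in [0, ∞]; equivalently, if the right-hand series is finite, 𝓔(X) = Σ_{n=1}^∞ μ_{n+1:n+1}/(n(n+1)) − E[X]. -/

import Mathlib

open MeasureTheory ProbabilityTheory Set
open scoped ENNReal

open Filter in
lemma hasSum_one_div_succ_mul : HasSum (fun n : ℕ => (1:ℝ)/(((n:ℝ)+1)*((n:ℝ)+2))) 1 := by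
  rw [hasSum_iff_tendsto_nat_of_nonneg (fun i => by positivity)]
  have hsum : ∀ n : ℕ, ∑ i ∈ Finset.range n, (1:ℝ)/(((i:ℝ)+1)*((i:ℝ)+2)) = 1 - 1/((n:ℝ)+1) := by
    intro n
    induction n with
    | zero => simp
    | succ n ih =>
      rw [Finset.sum_range_succ, ih]
      push_cast
      have h1 : (n:ℝ) + 1 ≠ 0 := by positivity
      have h2 : (n:ℝ) + 2 ≠ 0 := by positivity
      field_simp
      ring
  simp_rw [hsum]
  simpa using tendsto_one_div_add_atTop_nhds_zero_nat.const_sub (1:ℝ)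

lemma hasSum_key {p : ℝ} (h0 : 0 ≤ p) (h1 : p < 1) :
    HasSum (fun n : ℕ => (1 - p ^ (n + 2)) / (((n:ℝ)+1)*((n:ℝ)+2)))
      ((1 - p) - (1 - p) * Real.log (1 - p)) := by
  have habs : |p| < 1 := by rwa [abs_of_nonneg h0]
  have hL := Real.hasSum_pow_div_log_of_abs_lt_one habs
  have hB : HasSum (fun n : ℕ => p * (p ^ (n + 1) / ((n:ℝ)+1)))
      (p * (-Real.log (1 - p))) := hL.mul_left p
  have hC : HasSum (fun n : ℕ => p ^ (n + 2) / ((n:ℝ)+2))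
      (-Real.log (1 - p) - p) := by
    have := (hasSum_nat_add_iff' (f := fun n : ℕ => p ^ (n + 1) / ((n:ℝ)+1)) 1
      (g := -Real.log (1 - p))).2 hL
    simp only [Finset.range_one, Finset.sum_singleton] at this
    convert this using 2 with n
    · rfl
    · push_cast; ring_nf
    · norm_num
  have h := (hasSum_one_div_succ_mul.sub hB).add hC
  have hval : 1 - p * -Real.log (1 - p) + (-Real.log (1 - p) - p)
      = (1 - p) - (1 - p) * Real.log (1 - p) := by ring
  have hfun : (fun b : ℕ => 1 / (((b:ℝ) + 1) * ((b:ℝ) + 2))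
        - p * (p ^ (b + 1) / ((b:ℝ) + 1)) + p ^ (b + 2) / ((b:ℝ) + 2))
      = fun n : ℕ => (1 - p ^ (n + 2)) / (((n:ℝ)+1)*((n:ℝ)+2)) := by
    funext n
    have h1 : (n:ℝ) + 1 ≠ 0 := by positivity
    have h2 : (n:ℝ) + 2 ≠ 0 := by positivity
    field_simp
    ring
  rw [hfun, hval] at h
  exact h

lemma pointwise_key {p : ℝ} (h0 : 0 ≤ p) (h1 : p ≤ 1) :
    ENNReal.ofReal (-((1 - p) * Real.log (1 - p))) + ENNReal.ofReal (1 - p)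
      = ∑' n : ℕ, ENNReal.ofReal (1 - p ^ (n + 2))
          / (((n : ℝ≥0∞) + 1) * ((n : ℝ≥0∞) + 2)) := by
  rcases h1.eq_or_lt with rfl | hlt
  · simp
  · have hlog : Real.log (1 - p) ≤ 0 := Real.log_nonpos (by linarith) (by linarith)
    have hne1 : 0 ≤ -((1 - p) * Real.log (1 - p)) := by nlinarith
    have hc : ∀ n : ℕ, ((n : ℝ≥0∞) + 1) * ((n : ℝ≥0∞) + 2)
        = ENNReal.ofReal (((n:ℝ)+1)*((n:ℝ)+2)) := by
      intro n
      rw [ENNReal.ofReal_mul (by positivity)]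
      congr 1
      · rw [ENNReal.ofReal_add (by positivity) zero_le_one]
        simp
      · rw [ENNReal.ofReal_add (by positivity) (by norm_num)]
        simp [ENNReal.ofReal_ofNat]
    have hterm : ∀ n : ℕ, ENNReal.ofReal (1 - p ^ (n + 2))
        / (((n : ℝ≥0∞) + 1) * ((n : ℝ≥0∞) + 2))
        = ENNReal.ofReal ((1 - p ^ (n + 2)) / (((n:ℝ)+1)*((n:ℝ)+2))) := by
      intro n
      rw [hc n, ← ENNReal.ofReal_div_of_pos (by positivity)]
    have hnonneg : ∀ n : ℕ, 0 ≤ (1 - p ^ (n + 2)) / (((n:ℝ)+1)*((n:ℝ)+2)) := by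
      intro n
      have h := pow_le_one₀ h0 hlt.le (n := n + 2)
      exact div_nonneg (by linarith) (by positivity)
    rw [← ENNReal.ofReal_add hne1 (by linarith)]
    calc ENNReal.ofReal (-((1 - p) * Real.log (1 - p)) + (1 - p))
        = ENNReal.ofReal (∑' n : ℕ, (1 - p ^ (n + 2)) / (((n:ℝ)+1)*((n:ℝ)+2))) := by
          rw [(hasSum_key h0 hlt).tsum_eq]; ring_nf
      _ = ∑' n : ℕ, ENNReal.ofReal ((1 - p ^ (n + 2)) / (((n:ℝ)+1)*((n:ℝ)+2))) :=
          ENNReal.ofReal_tsum_of_nonneg hnonneg (hasSum_key h0 hlt).summable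
      _ = _ := by simp_rw [hterm]

/-- For a nonnegative random variable (here: a probability measure `μ` on `ℝ`
giving no mass to the negatives) with cdf `F = cdf μ` and finite mean
`E[X] = ∫₀^∞ (1 - F x) dx`, the cumulative residual entropy
`𝓔(X) = ∫₀^∞ -(1 - F x) log (1 - F x) dx` satisfies
`𝓔(X) + E[X] = ∑_{n=1}^∞ μ_{n+1:n+1} / (n (n+1))` as values in `[0, ∞]`,
where `μ_{m:m} = ∫₀^∞ (1 - (F x)^m) dx` is the mean of the largest order statistic. -/
theorem cre_add_mean_eq_tsum_max_order_stats
    (μ : Measure ℝ) [IsProbabilityMeasure μ] (hnonneg : μ (Set.Iio 0) = 0)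
    (hmean : ∫⁻ x in Set.Ioi (0 : ℝ), ENNReal.ofReal (1 - cdf μ x) ≠ ⊤) :
    (∫⁻ x in Set.Ioi (0 : ℝ),
        ENNReal.ofReal (-((1 - cdf μ x) * Real.log (1 - cdf μ x))))
      + ∫⁻ x in Set.Ioi (0 : ℝ), ENNReal.ofReal (1 - cdf μ x)
    = ∑' n : ℕ,
        (∫⁻ x in Set.Ioi (0 : ℝ), ENNReal.ofReal (1 - (cdf μ x) ^ (n + 2)))
          / (((n : ℝ≥0∞) + 1) * ((n : ℝ≥0∞) + 2)) := by
  have hF : Measurable (cdf μ) := (monotone_cdf (μ := μ)).measurable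
  have hc_ne_top : ∀ n : ℕ, ((((n : ℝ≥0∞) + 1) * ((n : ℝ≥0∞) + 2))⁻¹) ≠ ⊤ := by
    intro n
    simp [ENNReal.inv_ne_top]
  have hmeas : ∀ n : ℕ,
      Measurable (fun x : ℝ => ENNReal.ofReal (1 - (cdf μ x) ^ (n + 2))) := by
    intro n
    exact (measurable_const.sub (hF.pow_const _)).ennreal_ofReal
  have key : ∀ n : ℕ,
      (∫⁻ x in Set.Ioi (0 : ℝ), ENNReal.ofReal (1 - (cdf μ x) ^ (n + 2)))
          / (((n : ℝ≥0∞) + 1) * ((n : ℝ≥0∞) + 2))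
      = ∫⁻ x in Set.Ioi (0 : ℝ), ENNReal.ofReal (1 - (cdf μ x) ^ (n + 2))
          / (((n : ℝ≥0∞) + 1) * ((n : ℝ≥0∞) + 2)) := by
    intro n
    simp_rw [div_eq_mul_inv]
    rw [lintegral_mul_const'' _ ((hmeas n).aemeasurable)]
  simp_rw [key]
  rw [← lintegral_tsum (fun n => ((hmeas n).div_const _).aemeasurable)]
  rw [← lintegral_add_left (f := fun x => ENNReal.ofReal (-((1 - cdf μ x) * Real.log (1 - cdf μ x)))) ((measurable_const.sub hF).mul (hF.const_sub 1).log).neg.ennreal_ofReal]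
  refine lintegral_congr fun x => ?_
  exact pointwise_key (cdf_nonneg μ x) (cdf_le_one μ x)
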